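/- Let n be an even integer with n ≥ 2 and n ≠ 4, and let p ≥ 7 be a prime with p ≡ 1 (mod n) but p ≢ 1 (mod 2n). Then for all x, y ∈ pℤ_p: ∑_{k=0}^{(p-1)/n} [ (1/n)_k · ((2n-3)/(2n))_k · ((1-x)/n)_k · ((1-y)/n)_k · ((1-p)/n)_k ] / [ (5/(2n))_k · (1 + x/n)_k · (1 + y/n)_k · (1 + p/n)_k · k! ] ∈ pℤ_p. -/

import Mathlib

open Finset

/-- Rising factorial (Pochhammer symbol) `(a)_k = a(a+1)⋯(a+k-1)` in `ℚ_p`. -/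
noncomputable def rf {p : ℕ} [Fact p.Prime] (a : ℚ_[p]) (k : ℕ) : ℚ_[p] :=
  ∏ j ∈ Finset.range k, (a + (j : ℚ_[p]))
section Aux
variable {R : Type*} [CommRing R]

/-- generic rising factorial -/
def rfR (a : R) (k : ℕ) : R := ∏ j ∈ Finset.range k, (a + (j : R))

lemma rfR_succ (a : R) (k : ℕ) : rfR a (k+1) = rfR a k * (a + k) :=
  Finset.prod_range_succ _ _

lemma rfR_one (k : ℕ) : rfR (1:R) k = (k.factorial : R) := by
  induction k with
  | zero => simp [rfR]
  | succ k ih => rw [rfR_succ, ih, Nat.factorial_succ]; push_cast; ring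

lemma rfR_neg_nat (m : ℕ) : ∀ j ≤ m, rfR (-(m:R)) j * ((m-j).factorial : R) = (-1)^j * (m.factorial : R) := by
  intro j
  induction j with
  | zero => simp [rfR]
  | succ j ih =>
    intro hj
    have hj' : j ≤ m := by omega
    have h1 : (m - j) = (m - (j+1)) + 1 := by omega
    have h2 : ((m - j : ℕ) : R) = (m : R) - j := Nat.cast_sub hj'
    have key : rfR (-(m:R)) j * ((m-j).factorial : R) = (-1)^j * (m.factorial : R) := ih hj'
    rw [rfR_succ]
    have h3 : ((m - j).factorial : R) = ((m-(j+1)).factorial : R) * ((m:R) - j) := by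
      rw [h1, Nat.factorial_succ]
      push_cast
      rw [show ((m - (j+1) : ℕ) : R) + 1 = ((m - j : ℕ) : R) by rw [h1]; push_cast; ring, h2]
      ring
    have : rfR (-(m:R)) j * ((-(m:R)) + j) * ((m-(j+1)).factorial : R)
        = - (rfR (-(m:R)) j * ((m-j).factorial : R)) := by
      rw [h3]; ring
    rw [this, key]; ring

lemma rfR_refl_mul {a b : R} (m : ℕ) (h : a + b + m = 1) :
    ∀ k ≤ m, rfR a (m-k) * rfR b k = (-1)^k * rfR a m := by
  intro k
  induction k with
  | zero => simp [rfR]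
  | succ k ih =>
    intro hk
    have hk' : k ≤ m := by omega
    have h1 : m - k = (m - (k+1)) + 1 := by omega
    have h2 : ((m - (k+1) : ℕ) : R) = (m : R) - k - 1 := by
      rw [Nat.cast_sub hk]; push_cast; ring
    have key := ih hk'
    rw [h1, rfR_succ] at key
    have hbk : b + (k : R) = -(a + ((m - (k+1) : ℕ) : R)) := by
      rw [h2]; linear_combination h
    rw [rfR_succ]
    calc rfR a (m-(k+1)) * (rfR b k * (b + (k:R)))
        = -(rfR a (m - (k+1)) * (a + ((m-(k+1):ℕ):R)) * rfR b k) := by rw [hbk]; ring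
      _ = -((-1)^k * rfR a m) := by rw [key]
      _ = (-1)^(k+1) * rfR a m := by ring

lemma rfR_flip {a b : R} (m : ℕ) (h : a + b + m = 1) :
    rfR a m = (-1)^m * rfR b m := by
  unfold rfR
  rw [← Finset.prod_range_reflect (fun j => (a + (j:R))) m]
  have : ∀ j ∈ Finset.range m, a + ((m - 1 - j : ℕ) : R) = -(b + (j : R)) := by
    intro j hj
    rw [Finset.mem_range] at hj
    rw [Nat.cast_sub (by omega), Nat.cast_sub (by omega)]
    push_cast
    linear_combination h
  rw [Finset.prod_congr rfl this]
  have : ∀ j ∈ Finset.range m, -(b + (j:R)) = (-1) * (b + (j:R)) := by intros; ring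
  rw [Finset.prod_congr rfl this, Finset.prod_mul_distrib, Finset.prod_const]
  simp

end Aux

lemma nat_no_div (p n m j : ℕ) (hp7 : 7 ≤ p) (hn2 : 2 ≤ n) (hneven : Even n) (hn4 : n ≠ 4)
    (hpm : p = n*m + 1) (hmodd : Odd m) (hj : j < m) (hdvd : p ∣ 5 + 2*(n*j)) : False := by
  obtain ⟨t, ht⟩ := hdvd
  have h1 : n*j + n ≤ n*m := by
    have h := Nat.mul_le_mul (le_refl n) (show j+1 ≤ m by omega)
    rwa [Nat.mul_add, Nat.mul_one] at h
  have ht1 : t = 1 := by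
    rcases t with _ | t
    · omega
    rcases t with _ | t
    · rfl
    · exfalso
      have h2 : p*2 ≤ p*(t+1+1) := Nat.mul_le_mul (le_refl p) (by omega)
      omega
  rw [ht1, Nat.mul_one] at ht
  have heq : n*m = 4 + 2*(n*j) := by omega
  have hd4 : n ∣ 4 := by
    have d1 : n ∣ n*m := dvd_mul_right n m
    have d2 : n ∣ 2*(n*j) := ⟨2*j, by ring⟩
    have d3 := Nat.dvd_sub d1 d2
    rwa [show n*m - 2*(n*j) = 4 by omega] at d3
  have hle := Nat.le_of_dvd (by norm_num) hd4
  obtain ⟨w, hw⟩ := hmodd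
  interval_cases n
  · omega
  · exact absurd hneven (by decide)
  · exact hn4 rfl

lemma zmod_sum_zero (p n m : ℕ) [hf : Fact p.Prime] (hp7 : 7 ≤ p) (hn2 : 2 ≤ n)
    (hneven : Even n) (hn4 : n ≠ 4) (hpm : p = n * m + 1) (hmodd : Odd m) :
    ∑ k ∈ Finset.range (m+1),
      (rfR (2*(2*(n:ZMod p))⁻¹) k)^4 * rfR (1 - 3*(2*(n:ZMod p))⁻¹) k *
        (rfR (5*(2*(n:ZMod p))⁻¹) k * ((k.factorial : ℕ):ZMod p)^4)⁻¹ = 0 := by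
  have hppos : 0 < p := by omega
  have hmpos : 0 < m := hmodd.pos
  have hnnm : n ≤ n*m := Nat.le_mul_of_pos_right n hmpos
  have hmnm : m ≤ n*m := Nat.le_mul_of_pos_left m (by omega)
  have hmlt : m < p := by omega
  have hv : (2*(n:ZMod p)) ≠ 0 := by
    have : ((2*n : ℕ) : ZMod p) ≠ 0 := by
      rw [Ne, ZMod.natCast_eq_zero_iff]
      intro hdvd
      have := (Nat.Prime.dvd_mul hf.out).mp hdvd
      rcases this with h | h
      · exact absurd ((Nat.prime_dvd_prime_iff_eq hf.out Nat.prime_two).mp h) (by omega)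
      · have := Nat.le_of_dvd (by omega) h
        omega
    push_cast at this
    exact this
  set u : ZMod p := (2*(n:ZMod p))⁻¹ with hu
  have hvu : (2*(n:ZMod p)) * u = 1 := mul_inv_cancel₀ hv
  set α : ZMod p := 2*u with hαdef
  set β : ZMod p := 1 - 3*u with hβdef
  set γ : ZMod p := 5*u with hγdef
  have hn0 : (n : ZMod p) ≠ 0 := by
    intro h; apply hv; rw [h]; ring
  have hnm : (n:ZMod p) * (m:ZMod p) = -1 := by
    have h0 : ((n*m+1 : ℕ) : ZMod p) = 0 := by rw [← hpm]; exact ZMod.natCast_self p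
    push_cast at h0; linear_combination h0
  have hnα : (n:ZMod p) * α = 1 := by rw [hαdef]; linear_combination hvu
  have hαm : α = -(m : ZMod p) := by
    have h0 : (n:ZMod p) * (α + (m:ZMod p)) = 0 := by
      rw [mul_add, hnα, hnm]; ring
    rcases mul_eq_zero.mp h0 with h | h
    · exact absurd h hn0
    · linear_combination h
  have habm : β + γ + (m : ZMod p) = 1 := by
    rw [hβdef, hγdef]
    have : (2:ZMod p)*u = -(m:ZMod p) := by rw [← hαdef]; exact hαm
    linear_combination this
  have hKne : ∀ k ≤ m, ((k.factorial : ℕ) : ZMod p) ≠ 0 := by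
    intro k hk
    rw [Ne, ZMod.natCast_eq_zero_iff]
    intro hdvd
    have := (Nat.Prime.dvd_factorial hf.out).mp hdvd
    omega
  have hγj : ∀ j < m, γ + (j : ZMod p) ≠ 0 := by
    intro j hj hzero
    have h5 : ((5 + 2*(n*j) : ℕ) : ZMod p) = 0 := by
      push_cast
      have : (2*(n:ZMod p)) * (γ + (j:ZMod p)) = 0 := by rw [hzero]; ring
      have h2 : (2*(n:ZMod p)) * γ = 5 := by rw [hγdef]; linear_combination 5 * hvu
      linear_combination this - (by rw [mul_add, h2] : (2*(n:ZMod p)) * (γ + (j:ZMod p)) = 5 + 2*(n:ZMod p)*(j:ZMod p))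
    rw [ZMod.natCast_eq_zero_iff] at h5
    exact nat_no_div p n m j hp7 hn2 hneven hn4 hpm hmodd hj h5
  have hGne : ∀ k ≤ m, rfR γ k ≠ 0 := by
    intro k hk
    unfold rfR
    rw [Finset.prod_ne_zero_iff]
    intro j hj
    exact hγj j (by simp at hj; omega)
  have key : ∀ k ≤ m, (rfR α (m-k))^4 * rfR β (m-k) *
        (rfR γ (m-k) * (((m-k).factorial : ℕ):ZMod p)^4)⁻¹
      = -((rfR α k)^4 * rfR β k * (rfR γ k * ((k.factorial : ℕ):ZMod p)^4)⁻¹) := by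
    intro k hk
    have hk' : m - k ≤ m := by omega
    have hKk := hKne k hk
    have hKmk := hKne (m-k) hk'
    have hGk := hGne k hk
    have hGmk := hGne (m-k) hk'
    have n1 : rfR α (m-k) * ((k.factorial : ℕ):ZMod p) = (-1)^(m-k) * (m.factorial : ZMod p) := by
      have h := rfR_neg_nat (R := ZMod p) m (m-k) hk'
      rw [← hαm] at h
      rwa [show m - (m-k) = k by omega] at h
    have n2 : rfR α k * (((m-k).factorial : ℕ):ZMod p) = (-1)^k * (m.factorial : ZMod p) := by
      have h := rfR_neg_nat (R := ZMod p) m k hk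
      rwa [← hαm] at h
    have b1 : rfR β (m-k) * rfR γ k = (-1)^k * rfR β m := rfR_refl_mul m habm k hk
    have b2 : rfR γ (m-k) * rfR β k = (-1)^k * rfR γ m :=
      rfR_refl_mul m (by linear_combination habm) k hk
    have flip : rfR β m = - rfR γ m := by
      rw [rfR_flip m habm, hmodd.neg_one_pow]; ring
    have e1 : (rfR α (m-k) * ((k.factorial : ℕ):ZMod p))^4 = (m.factorial : ZMod p)^4 := by
      rw [n1, mul_pow, ← pow_mul, show (m-k)*4 = 2*(2*(m-k)) by ring, pow_mul]
      simp
    have e2 : (rfR α k * (((m-k).factorial : ℕ):ZMod p))^4 = (m.factorial : ZMod p)^4 := by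
      rw [n2, mul_pow, ← pow_mul, show k*4 = 2*(2*k) by ring, pow_mul]
      simp
    have E : (rfR α (m-k))^4 * rfR β (m-k) * (rfR γ k * ((k.factorial:ℕ):ZMod p)^4)
        = -((rfR α k)^4 * rfR β k * (rfR γ (m-k) * (((m-k).factorial:ℕ):ZMod p)^4)) := by
      calc (rfR α (m-k))^4 * rfR β (m-k) * (rfR γ k * ((k.factorial:ℕ):ZMod p)^4)
          = (rfR α (m-k) * ((k.factorial:ℕ):ZMod p))^4 * (rfR β (m-k) * rfR γ k) := by ring
        _ = (m.factorial : ZMod p)^4 * ((-1)^k * rfR β m) := by rw [e1, b1]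
        _ = -((m.factorial : ZMod p)^4 * ((-1)^k * rfR γ m)) := by rw [flip]; ring
        _ = -((rfR α k * (((m-k).factorial:ℕ):ZMod p))^4 * (rfR γ (m-k) * rfR β k)) := by
            rw [e2, b2]
        _ = -((rfR α k)^4 * rfR β k * (rfR γ (m-k) * (((m-k).factorial:ℕ):ZMod p)^4)) := by ring
    have hDk : rfR γ k * ((k.factorial:ℕ):ZMod p)^4 ≠ 0 :=
      mul_ne_zero hGk (pow_ne_zero _ hKk)
    have hDmk : rfR γ (m-k) * (((m-k).factorial:ℕ):ZMod p)^4 ≠ 0 :=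
      mul_ne_zero hGmk (pow_ne_zero _ hKmk)
    field_simp
    linear_combination E
  set f : ℕ → ZMod p := fun k =>
    (rfR α k)^4 * rfR β k * (rfR γ k * ((k.factorial : ℕ):ZMod p)^4)⁻¹ with hfdef
  have hrefl : ∑ k ∈ Finset.range (m+1), f (m + 1 - 1 - k) = ∑ k ∈ Finset.range (m+1), f k :=
    Finset.sum_range_reflect f (m+1)
  have hneg : ∀ k ∈ Finset.range (m+1), f (m + 1 - 1 - k) = -(f k) := by
    intro k hk
    rw [Finset.mem_range] at hk
    rw [show m + 1 - 1 - k = m - k by omega]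
    exact key k (by omega)
  rw [Finset.sum_congr rfl hneg] at hrefl
  rw [Finset.sum_neg_distrib] at hrefl
  have h2ne : (2 : ZMod p) ≠ 0 := by
    have : ((2:ℕ) : ZMod p) ≠ 0 := by
      rw [Ne, ZMod.natCast_eq_zero_iff]
      intro h
      have := Nat.le_of_dvd (by omega) h
      omega
    exact_mod_cast this
  have : (2 : ZMod p) * (∑ k ∈ Finset.range (m+1), f k) = 0 := by
    linear_combination -hrefl
  rcases mul_eq_zero.mp this with h | h
  · exact absurd h h2ne
  · exact h

lemma zmod_v_ne (p n m : ℕ) [hf : Fact p.Prime] (hp7 : 7 ≤ p) (hn2 : 2 ≤ n)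
    (hpm : p = n * m + 1) (hmpos : 0 < m) : (2*(n:ZMod p)) ≠ 0 := by
  have hnnm : n ≤ n*m := Nat.le_mul_of_pos_right n hmpos
  have : ((2*n : ℕ) : ZMod p) ≠ 0 := by
    rw [Ne, ZMod.natCast_eq_zero_iff]
    intro hdvd
    have := (Nat.Prime.dvd_mul hf.out).mp hdvd
    rcases this with h | h
    · exact absurd ((Nat.prime_dvd_prime_iff_eq hf.out Nat.prime_two).mp h) (by omega)
    · have := Nat.le_of_dvd (by omega) h
      omega
  push_cast at this
  exact this

lemma zmod_K_ne (p m : ℕ) [hf : Fact p.Prime] (hmlt : m < p) :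
    ∀ k ≤ m, ((k.factorial : ℕ) : ZMod p) ≠ 0 := by
  intro k hk
  rw [Ne, ZMod.natCast_eq_zero_iff]
  intro hdvd
  have := (Nat.Prime.dvd_factorial hf.out).mp hdvd
  omega

lemma zmod_G_ne (p n m : ℕ) [hf : Fact p.Prime] (hp7 : 7 ≤ p) (hn2 : 2 ≤ n)
    (hneven : Even n) (hn4 : n ≠ 4) (hpm : p = n * m + 1) (hmodd : Odd m) :
    ∀ k ≤ m, rfR (5*(2*(n:ZMod p))⁻¹) k ≠ 0 := by
  have hv : (2*(n:ZMod p)) ≠ 0 := zmod_v_ne p n m hp7 hn2 hpm hmodd.pos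
  have hvu : (2*(n:ZMod p)) * (2*(n:ZMod p))⁻¹ = 1 := mul_inv_cancel₀ hv
  have hγj : ∀ j < m, 5*(2*(n:ZMod p))⁻¹ + (j : ZMod p) ≠ 0 := by
    intro j hj hzero
    have h5 : ((5 + 2*(n*j) : ℕ) : ZMod p) = 0 := by
      push_cast
      have h1 : (2*(n:ZMod p)) * (5*(2*(n:ZMod p))⁻¹ + (j:ZMod p)) = 0 := by rw [hzero]; ring
      linear_combination h1 - 5 * hvu
    rw [ZMod.natCast_eq_zero_iff] at h5
    exact nat_no_div p n m j hp7 hn2 hneven hn4 hpm hmodd hj h5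
  intro k hk
  unfold rfR
  rw [Finset.prod_ne_zero_iff]
  intro j hj
  exact hγj j (by simp at hj; omega)

lemma isUnit_of_toZMod_ne {p : ℕ} [Fact p.Prime] {z : ℤ_[p]} (h : PadicInt.toZMod z ≠ 0) :
    IsUnit z := by
  by_contra hu
  rw [PadicInt.not_isUnit_iff] at hu
  apply h
  have hmem : z ∈ RingHom.ker (PadicInt.toZMod : ℤ_[p] →+* ZMod p) := by
    rw [PadicInt.ker_toZMod]
    exact (IsLocalRing.mem_maximalIdeal z).mpr (PadicInt.mem_nonunits.mpr hu)
  exact RingHom.mem_ker.mp hmem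

/-- scaled product in `ℤ_[p]` -/
noncomputable def Pp (p : ℕ) [Fact p.Prime] (n : ℕ) (a : ℤ_[p]) (k : ℕ) : ℤ_[p] :=
  ∏ j ∈ Finset.range k, (a + (2*(n:ℤ_[p]))*(j:ℤ_[p]))

lemma toZMod_Pp (p n : ℕ) [Fact p.Prime] (a : ℤ_[p]) (c : ZMod p) (k : ℕ)
    (hc : PadicInt.toZMod a = (2*(n:ZMod p)) * c) :
    PadicInt.toZMod (Pp p n a k) = (2*(n:ZMod p))^k * rfR c k := by
  unfold Pp rfR
  rw [map_prod]
  have : ∀ j ∈ Finset.range k, PadicInt.toZMod (a + (2*(n:ℤ_[p]))*(j:ℤ_[p]))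
      = (2*(n:ZMod p)) * (c + (j : ZMod p)) := by
    intro j _
    rw [map_add, map_mul, hc]
    have h1 : PadicInt.toZMod (2*(n:ℤ_[p])) = 2*(n:ZMod p) := by
      rw [map_mul, map_natCast, map_ofNat]
    have h2 : PadicInt.toZMod ((j:ℕ) : ℤ_[p]) = (j : ZMod p) := map_natCast _ j
    rw [h1, h2]; ring
  rw [Finset.prod_congr rfl this, Finset.prod_mul_distrib, Finset.prod_const]
  simp

lemma rf_eq_Pp (p n : ℕ) [Fact p.Prime] (hn : (2*(n:ℚ_[p])) ≠ 0) (a : ℤ_[p]) (k : ℕ) :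
    rf ((a : ℚ_[p]) / (2*(n:ℚ_[p]))) k = ((Pp p n a k : ℤ_[p]) : ℚ_[p]) / (2*(n:ℚ_[p]))^k := by
  unfold rf Pp
  rw [eq_div_iff (pow_ne_zero k hn)]
  have hcast : ((∏ j ∈ Finset.range k, (a + 2*(n:ℤ_[p])*(j:ℤ_[p])) : ℤ_[p]) : ℚ_[p])
      = ∏ j ∈ Finset.range k, ((a:ℚ_[p]) + 2*(n:ℚ_[p])*(j:ℚ_[p])) := by
    rw [show ((∏ j ∈ Finset.range k, (a + 2*(n:ℤ_[p])*(j:ℤ_[p])) : ℤ_[p]) : ℚ_[p])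
        = PadicInt.Coe.ringHom (∏ j ∈ Finset.range k, (a + 2*(n:ℤ_[p])*(j:ℤ_[p]))) from rfl]
    rw [map_prod]
    apply Finset.prod_congr rfl
    intro j _
    show (((a + 2*(n:ℤ_[p])*(j:ℤ_[p])) : ℤ_[p]) : ℚ_[p]) = _
    push_cast
    rw [show ((2:ℤ_[p]):ℚ_[p]) = 2 from rfl]
  rw [hcast]
  rw [show ((2*(n:ℚ_[p]))^k) = ∏ _j ∈ Finset.range k, (2*(n:ℚ_[p])) from by
    rw [Finset.prod_const, Finset.card_range]]
  rw [← Finset.prod_mul_distrib]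
  apply Finset.prod_congr rfl
  intro j _
  rw [add_mul, div_mul_cancel₀ _ hn]
  ring

lemma frac_assemble {K : Type*} [Field K] (A1 A2 A3 A4 A5 B1 B2 B3 B4 F c : K)
    (hB1 : B1 ≠ 0) (hB2 : B2 ≠ 0) (hB3 : B3 ≠ 0) (hB4 : B4 ≠ 0) (hF : F ≠ 0) (hc : c ≠ 0) :
    A1/c * (A2/c) * (A3/c) * (A4/c) * (A5/c) / (B1/c * (B2/c) * (B3/c) * (B4/c) * F)
      = A1*A2*A3*A4*A5 / (B1*B2*B3*B4*F*c) := by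
  field_simp

/-- Let `n` be even with `n ≥ 2`, `n ≠ 4`, and `p ≥ 7` prime with `p ≡ 1 (mod n)`
but `p ≢ 1 (mod 2n)`. Then for all `x, y ∈ pℤ_p`,
`∑_{k=0}^{(p-1)/n} (1/n)_k ((2n-3)/(2n))_k ((1-x)/n)_k ((1-y)/n)_k ((1-p)/n)_k /
  ((5/(2n))_k (1+x/n)_k (1+y/n)_k (1+p/n)_k k!) ∈ pℤ_p`. -/
theorem stmt8 (n p : ℕ) [Fact p.Prime] (hn2 : 2 ≤ n) (hneven : Even n) (hn4 : n ≠ 4)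
    (hp : 7 ≤ p) (hpn : p % n = 1) (hpn2 : ¬ p % (2 * n) = 1) :
    ∀ x y : ℚ_[p], (∃ s : ℤ_[p], x = (p : ℚ_[p]) * s) →
      (∃ s : ℤ_[p], y = (p : ℚ_[p]) * s) →
      ∃ c : ℤ_[p],
        (∑ k ∈ Finset.range ((p - 1) / n + 1),
          rf (1 / (n : ℚ_[p])) k *
            rf ((2 * (n : ℚ_[p]) - 3) / (2 * (n : ℚ_[p]))) k *
            rf ((1 - x) / (n : ℚ_[p])) k *
            rf ((1 - y) / (n : ℚ_[p])) k *
            rf ((1 - (p : ℚ_[p])) / (n : ℚ_[p])) k /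
          (rf (5 / (2 * (n : ℚ_[p]))) k *
            rf (1 + x / (n : ℚ_[p])) k *
            rf (1 + y / (n : ℚ_[p])) k *
            rf (1 + (p : ℚ_[p]) / (n : ℚ_[p])) k * (k.factorial : ℚ_[p])))
        = (p : ℚ_[p]) * (c : ℚ_[p]) := by
  classical
  intro x y hx hy
  obtain ⟨s, hs⟩ := hx
  obtain ⟨t, ht⟩ := hy
  set m := (p - 1) / n with hmdef
  have h0 : n * (p / n) = p - 1 := by
    have := Nat.div_add_mod p n; omega
  have hm1 : m = p / n := by rw [hmdef, ← h0, Nat.mul_div_cancel_left _ (by omega : 0 < n)]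
  have hpm : p = n * m + 1 := by rw [hm1, h0]; omega
  have hmodd : Odd m := by
    rw [← Nat.not_even_iff_odd]
    intro hev
    obtain ⟨w, hw⟩ := hev
    apply hpn2
    have hpw : p = 2*n*w + 1 := by rw [hpm, hw]; ring
    rw [hpw, Nat.mul_add_mod]
    exact Nat.mod_eq_of_lt (by omega)
  have hmpos : 0 < m := hmodd.pos
  have hmnm : m ≤ n * m := Nat.le_mul_of_pos_left m (by omega)
  have hmlt : m < p := by omega
  have hn0Q : (n : ℚ_[p]) ≠ 0 := Nat.cast_ne_zero.mpr (by omega)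
  have h2nQ : (2*(n:ℚ_[p])) ≠ 0 := by
    have h := Nat.cast_ne_zero (R := ℚ_[p]).mpr (show 2*n ≠ 0 by omega)
    push_cast at h; exact h
  have hv : (2*(n:ZMod p)) ≠ 0 := zmod_v_ne p n m hp hn2 hpm hmpos
  have hvu : (2*(n:ZMod p)) * (2*(n:ZMod p))⁻¹ = 1 := mul_inv_cancel₀ hv
  set u : ZMod p := (2*(n:ZMod p))⁻¹ with hu
  set α : ZMod p := 2*u with hαdef
  set β : ZMod p := 1 - 3*u with hβdef
  set γ : ZMod p := 5*u with hγdef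
  have hKne := zmod_K_ne p m hmlt
  have hGne := zmod_G_ne p n m hp hn2 hneven hn4 hpm hmodd
  set X : ℤ_[p] := (p:ℤ_[p]) * s with hXdef
  set Y : ℤ_[p] := (p:ℤ_[p]) * t with hYdef
  have hxX : x = (X : ℚ_[p]) := by rw [hs, hXdef]; push_cast; ring
  have hyY : y = (Y : ℚ_[p]) := by rw [ht, hYdef]; push_cast; ring
  have hφp : PadicInt.toZMod ((p:ℕ) : ℤ_[p]) = 0 := by
    rw [map_natCast]; exact ZMod.natCast_self p
  have hφX : PadicInt.toZMod X = 0 := by rw [hXdef, map_mul, hφp, zero_mul]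
  have hφY : PadicInt.toZMod Y = 0 := by rw [hYdef, map_mul, hφp, zero_mul]
  have hφ2n : PadicInt.toZMod (2*(n:ℤ_[p])) = 2*(n:ZMod p) := by
    rw [map_mul, map_natCast, map_ofNat]
  -- residues of the nine parameters
  have hφ2 : PadicInt.toZMod (2 : ℤ_[p]) = (2*(n:ZMod p)) * α := by
    rw [map_ofNat, hαdef]; linear_combination -2 * hvu
  have hφ2n3 : PadicInt.toZMod (2*(n:ℤ_[p]) - 3) = (2*(n:ZMod p)) * β := by
    rw [map_sub, hφ2n, map_ofNat, hβdef]; linear_combination 3 * hvu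
  have hφ2X : PadicInt.toZMod (2 - 2*X) = (2*(n:ZMod p)) * α := by
    rw [map_sub, map_mul, hφX, map_ofNat, hαdef]; linear_combination -2 * hvu
  have hφ2Y : PadicInt.toZMod (2 - 2*Y) = (2*(n:ZMod p)) * α := by
    rw [map_sub, map_mul, hφY, map_ofNat, hαdef]; linear_combination -2 * hvu
  have hφ2p : PadicInt.toZMod (2 - 2*((p:ℕ):ℤ_[p])) = (2*(n:ZMod p)) * α := by
    rw [map_sub, map_mul, hφp, map_ofNat, hαdef]; linear_combination -2 * hvu
  have hφ5 : PadicInt.toZMod (5 : ℤ_[p]) = (2*(n:ZMod p)) * γ := by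
    rw [map_ofNat, hγdef]; linear_combination -5 * hvu
  have hφnX : PadicInt.toZMod (2*(n:ℤ_[p]) + 2*X) = (2*(n:ZMod p)) * 1 := by
    rw [map_add, hφ2n, map_mul, hφX]; ring
  have hφnY : PadicInt.toZMod (2*(n:ℤ_[p]) + 2*Y) = (2*(n:ZMod p)) * 1 := by
    rw [map_add, hφ2n, map_mul, hφY]; ring
  have hφnp : PadicInt.toZMod (2*(n:ℤ_[p]) + 2*((p:ℕ):ℤ_[p])) = (2*(n:ZMod p)) * 1 := by
    rw [map_add, hφ2n, map_mul, hφp]; ring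
  set NP : ℕ → ℤ_[p] := fun k => Pp p n 2 k * Pp p n (2*(n:ℤ_[p]) - 3) k *
    Pp p n (2 - 2*X) k * Pp p n (2 - 2*Y) k * Pp p n (2 - 2*((p:ℕ):ℤ_[p])) k with hNPdef
  set DP : ℕ → ℤ_[p] := fun k => Pp p n 5 k * Pp p n (2*(n:ℤ_[p]) + 2*X) k *
    Pp p n (2*(n:ℤ_[p]) + 2*Y) k * Pp p n (2*(n:ℤ_[p]) + 2*((p:ℕ):ℤ_[p])) k *
    ((k.factorial : ℕ) : ℤ_[p]) * (2*(n:ℤ_[p]))^k with hDPdef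
  have hφNP : ∀ k, PadicInt.toZMod (NP k)
      = ((2*(n:ZMod p))^k)^5 * ((rfR α k)^4 * rfR β k) := by
    intro k
    rw [hNPdef]
    simp only [map_mul]
    rw [toZMod_Pp p n _ _ _ hφ2, toZMod_Pp p n _ _ _ hφ2n3, toZMod_Pp p n _ _ _ hφ2X,
      toZMod_Pp p n _ _ _ hφ2Y, toZMod_Pp p n _ _ _ hφ2p]
    ring
  have hφDP : ∀ k, PadicInt.toZMod (DP k)
      = ((2*(n:ZMod p))^k)^5 * (rfR γ k * ((k.factorial : ℕ) : ZMod p)^4) := by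
    intro k
    have hb : PadicInt.toZMod ((2*(n:ℤ_[p]))^k) = (2*(n:ZMod p))^k := by
      rw [map_pow, hφ2n]
    rw [hDPdef]
    simp only [map_mul]
    rw [toZMod_Pp p n _ _ _ hφ5, toZMod_Pp p n _ _ _ hφnX, toZMod_Pp p n _ _ _ hφnY,
      toZMod_Pp p n _ _ _ hφnp, map_natCast, hb, rfR_one]
    ring
  have hvk : ∀ k, ((2*(n:ZMod p))^k)^5 ≠ 0 := fun k => pow_ne_zero _ (pow_ne_zero _ hv)
  have hU5 : ∀ k ≤ m, IsUnit (Pp p n 5 k) := by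
    intro k hk
    apply isUnit_of_toZMod_ne
    rw [toZMod_Pp p n _ _ _ hφ5]
    exact mul_ne_zero (pow_ne_zero _ hv) (hGne k hk)
  have hUnX : ∀ k ≤ m, IsUnit (Pp p n (2*(n:ℤ_[p]) + 2*X) k) := by
    intro k hk
    apply isUnit_of_toZMod_ne
    rw [toZMod_Pp p n _ _ _ hφnX, rfR_one]
    exact mul_ne_zero (pow_ne_zero _ hv) (hKne k hk)
  have hUnY : ∀ k ≤ m, IsUnit (Pp p n (2*(n:ℤ_[p]) + 2*Y) k) := by
    intro k hk
    apply isUnit_of_toZMod_ne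
    rw [toZMod_Pp p n _ _ _ hφnY, rfR_one]
    exact mul_ne_zero (pow_ne_zero _ hv) (hKne k hk)
  have hUnp : ∀ k ≤ m, IsUnit (Pp p n (2*(n:ℤ_[p]) + 2*((p:ℕ):ℤ_[p])) k) := by
    intro k hk
    apply isUnit_of_toZMod_ne
    rw [toZMod_Pp p n _ _ _ hφnp, rfR_one]
    exact mul_ne_zero (pow_ne_zero _ hv) (hKne k hk)
  have hUfact : ∀ k ≤ m, IsUnit (((k.factorial : ℕ)) : ℤ_[p]) := by
    intro k hk
    apply isUnit_of_toZMod_ne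
    rw [map_natCast]
    exact hKne k hk
  have hUpow : ∀ k : ℕ, IsUnit ((2*(n:ℤ_[p]))^k) := by
    intro k
    apply isUnit_of_toZMod_ne
    rw [map_pow, hφ2n]
    exact pow_ne_zero _ hv
  have hUDP : ∀ k ≤ m, IsUnit (DP k) := by
    intro k hk
    rw [hDPdef]
    exact (((((hU5 k hk).mul (hUnX k hk)).mul (hUnY k hk)).mul (hUnp k hk)).mul
      (hUfact k hk)).mul (hUpow k)
  set w : ℕ → ℤ_[p] := fun k =>
    if h : IsUnit (DP k) then NP k * ↑h.unit⁻¹ else 0 with hwdef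
  have hinv1 : ∀ k (h : IsUnit (DP k)), DP k * ↑h.unit⁻¹ = 1 := by
    intro k h
    exact h.mul_val_inv
  have hwzmod : ∀ k ≤ m, PadicInt.toZMod (w k)
      = (rfR α k)^4 * rfR β k * (rfR γ k * ((k.factorial:ℕ):ZMod p)^4)⁻¹ := by
    intro k hk
    rw [hwdef]
    simp only
    rw [dif_pos (hUDP k hk), map_mul]
    have h1 : PadicInt.toZMod (DP k) * PadicInt.toZMod (↑(hUDP k hk).unit⁻¹ : ℤ_[p]) = 1 := by
      rw [← map_mul, hinv1 k (hUDP k hk), map_one]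
    have h2 : PadicInt.toZMod (↑(hUDP k hk).unit⁻¹ : ℤ_[p]) = (PadicInt.toZMod (DP k))⁻¹ :=
      eq_inv_of_mul_eq_one_right h1
    rw [hφNP k, h2, hφDP k, mul_inv]
    calc ((2*(n:ZMod p))^k)^5 * ((rfR α k)^4 * rfR β k) *
          ((((2*(n:ZMod p))^k)^5)⁻¹ * (rfR γ k * ((k.factorial:ℕ):ZMod p)^4)⁻¹)
        = (((2*(n:ZMod p))^k)^5 * (((2*(n:ZMod p))^k)^5)⁻¹) *
          ((rfR α k)^4 * rfR β k * (rfR γ k * ((k.factorial:ℕ):ZMod p)^4)⁻¹) := by ring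
      _ = (rfR α k)^4 * rfR β k * (rfR γ k * ((k.factorial:ℕ):ZMod p)^4)⁻¹ := by
          rw [mul_inv_cancel₀ (hvk k), one_mul]
  have hwcoe : ∀ k ≤ m,
      rf (1 / (n : ℚ_[p])) k *
        rf ((2 * (n : ℚ_[p]) - 3) / (2 * (n : ℚ_[p]))) k *
        rf ((1 - x) / (n : ℚ_[p])) k *
        rf ((1 - y) / (n : ℚ_[p])) k *
        rf ((1 - (p : ℚ_[p])) / (n : ℚ_[p])) k /
      (rf (5 / (2 * (n : ℚ_[p]))) k *
        rf (1 + x / (n : ℚ_[p])) k *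
        rf (1 + y / (n : ℚ_[p])) k *
        rf (1 + (p : ℚ_[p]) / (n : ℚ_[p])) k * (k.factorial : ℚ_[p]))
      = ((w k : ℤ_[p]) : ℚ_[p]) := by
    intro k hk
    have c2 : ((2:ℤ_[p]):ℚ_[p]) = 2 := rfl
    have c3 : ((3:ℤ_[p]):ℚ_[p]) = 3 := rfl
    have c5 : ((5:ℤ_[p]):ℚ_[p]) = 5 := rfl
    have cn : (((n:ℕ):ℤ_[p]):ℚ_[p]) = (n:ℚ_[p]) := PadicInt.coe_natCast n
    have cp : (((p:ℕ):ℤ_[p]):ℚ_[p]) = (p:ℚ_[p]) := PadicInt.coe_natCast p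
    have h1 : rf (1 / (n:ℚ_[p])) k = ((Pp p n 2 k : ℤ_[p]):ℚ_[p]) / (2*(n:ℚ_[p]))^k := by
      rw [show (1:ℚ_[p])/(n:ℚ_[p]) = ((2:ℤ_[p]):ℚ_[p])/(2*(n:ℚ_[p])) from by
        rw [c2, div_eq_div_iff hn0Q h2nQ]; ring]
      exact rf_eq_Pp p n h2nQ 2 k
    have h2 : rf ((2*(n:ℚ_[p]) - 3) / (2*(n:ℚ_[p]))) k
        = ((Pp p n (2*(n:ℤ_[p]) - 3) k : ℤ_[p]):ℚ_[p]) / (2*(n:ℚ_[p]))^k := by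
      have e := rf_eq_Pp p n h2nQ (2*(n:ℤ_[p]) - 3) k
      rw [show ((2*(n:ℤ_[p]) - 3 : ℤ_[p]):ℚ_[p]) = 2*(n:ℚ_[p]) - 3 from by
        rw [PadicInt.coe_sub, PadicInt.coe_mul, c2, c3, cn]] at e
      exact e
    have h3 : rf ((1 - x) / (n:ℚ_[p])) k
        = ((Pp p n (2 - 2*X) k : ℤ_[p]):ℚ_[p]) / (2*(n:ℚ_[p]))^k := by
      have e := rf_eq_Pp p n h2nQ (2 - 2*X) k
      rw [show ((2 - 2*X : ℤ_[p]):ℚ_[p]) = 2*(1 - x) from by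
        rw [PadicInt.coe_sub, PadicInt.coe_mul, c2, hxX]; ring] at e
      rw [show (2*(1-x))/(2*(n:ℚ_[p])) = (1-x)/(n:ℚ_[p]) from by
        rw [div_eq_div_iff h2nQ hn0Q]; ring] at e
      exact e
    have h4 : rf ((1 - y) / (n:ℚ_[p])) k
        = ((Pp p n (2 - 2*Y) k : ℤ_[p]):ℚ_[p]) / (2*(n:ℚ_[p]))^k := by
      have e := rf_eq_Pp p n h2nQ (2 - 2*Y) k
      rw [show ((2 - 2*Y : ℤ_[p]):ℚ_[p]) = 2*(1 - y) from by
        rw [PadicInt.coe_sub, PadicInt.coe_mul, c2, hyY]; ring] at e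
      rw [show (2*(1-y))/(2*(n:ℚ_[p])) = (1-y)/(n:ℚ_[p]) from by
        rw [div_eq_div_iff h2nQ hn0Q]; ring] at e
      exact e
    have h5 : rf ((1 - (p:ℚ_[p])) / (n:ℚ_[p])) k
        = ((Pp p n (2 - 2*((p:ℕ):ℤ_[p])) k : ℤ_[p]):ℚ_[p]) / (2*(n:ℚ_[p]))^k := by
      have e := rf_eq_Pp p n h2nQ (2 - 2*((p:ℕ):ℤ_[p])) k
      rw [show ((2 - 2*((p:ℕ):ℤ_[p]) : ℤ_[p]):ℚ_[p]) = 2*(1 - (p:ℚ_[p])) from by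
        rw [PadicInt.coe_sub, PadicInt.coe_mul, c2, cp]; ring] at e
      rw [show (2*(1-(p:ℚ_[p])))/(2*(n:ℚ_[p])) = (1-(p:ℚ_[p]))/(n:ℚ_[p]) from by
        rw [div_eq_div_iff h2nQ hn0Q]; ring] at e
      exact e
    have h6 : rf (5 / (2*(n:ℚ_[p]))) k
        = ((Pp p n 5 k : ℤ_[p]):ℚ_[p]) / (2*(n:ℚ_[p]))^k := by
      rw [show (5:ℚ_[p]) = ((5:ℤ_[p]):ℚ_[p]) from c5.symm]
      exact rf_eq_Pp p n h2nQ 5 k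
    have h7 : rf (1 + x / (n:ℚ_[p])) k
        = ((Pp p n (2*(n:ℤ_[p]) + 2*X) k : ℤ_[p]):ℚ_[p]) / (2*(n:ℚ_[p]))^k := by
      have e := rf_eq_Pp p n h2nQ (2*(n:ℤ_[p]) + 2*X) k
      rw [show ((2*(n:ℤ_[p]) + 2*X : ℤ_[p]):ℚ_[p]) = 2*(n:ℚ_[p]) + 2*x from by
        rw [PadicInt.coe_add, PadicInt.coe_mul, PadicInt.coe_mul, c2, cn, hxX]] at e
      rw [show (2*(n:ℚ_[p]) + 2*x)/(2*(n:ℚ_[p])) = 1 + x/(n:ℚ_[p]) from by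
        field_simp] at e
      exact e
    have h8 : rf (1 + y / (n:ℚ_[p])) k
        = ((Pp p n (2*(n:ℤ_[p]) + 2*Y) k : ℤ_[p]):ℚ_[p]) / (2*(n:ℚ_[p]))^k := by
      have e := rf_eq_Pp p n h2nQ (2*(n:ℤ_[p]) + 2*Y) k
      rw [show ((2*(n:ℤ_[p]) + 2*Y : ℤ_[p]):ℚ_[p]) = 2*(n:ℚ_[p]) + 2*y from by
        rw [PadicInt.coe_add, PadicInt.coe_mul, PadicInt.coe_mul, c2, cn, hyY]] at e
      rw [show (2*(n:ℚ_[p]) + 2*y)/(2*(n:ℚ_[p])) = 1 + y/(n:ℚ_[p]) from by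
        field_simp] at e
      exact e
    have h9 : rf (1 + (p:ℚ_[p]) / (n:ℚ_[p])) k
        = ((Pp p n (2*(n:ℤ_[p]) + 2*((p:ℕ):ℤ_[p])) k : ℤ_[p]):ℚ_[p]) / (2*(n:ℚ_[p]))^k := by
      have e := rf_eq_Pp p n h2nQ (2*(n:ℤ_[p]) + 2*((p:ℕ):ℤ_[p])) k
      rw [show ((2*(n:ℤ_[p]) + 2*((p:ℕ):ℤ_[p]) : ℤ_[p]):ℚ_[p]) = 2*(n:ℚ_[p]) + 2*(p:ℚ_[p]) from by
        rw [PadicInt.coe_add, PadicInt.coe_mul, PadicInt.coe_mul, c2, cn, cp]] at e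
      rw [show (2*(n:ℚ_[p]) + 2*(p:ℚ_[p]))/(2*(n:ℚ_[p])) = 1 + (p:ℚ_[p])/(n:ℚ_[p]) from by
        field_simp] at e
      exact e
    rw [h1, h2, h3, h4, h5, h6, h7, h8, h9]
    rw [hwdef]
    simp only
    rw [dif_pos (hUDP k hk)]
    have hiDP : ((DP k : ℤ_[p]):ℚ_[p]) * ((↑(hUDP k hk).unit⁻¹ : ℤ_[p]):ℚ_[p]) = 1 := by
      rw [← PadicInt.coe_mul, hinv1 k (hUDP k hk)]; rfl
    have hiinv : ((↑(hUDP k hk).unit⁻¹ : ℤ_[p]):ℚ_[p]) = (((DP k : ℤ_[p]):ℚ_[p]))⁻¹ :=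
      eq_inv_of_mul_eq_one_right hiDP
    rw [PadicInt.coe_mul, hiinv, ← div_eq_mul_inv]
    have hB1 : ((Pp p n 5 k : ℤ_[p]):ℚ_[p]) ≠ 0 :=
      PadicInt.coe_ne_zero.mpr (hU5 k hk).ne_zero
    have hB2 : ((Pp p n (2*(n:ℤ_[p]) + 2*X) k : ℤ_[p]):ℚ_[p]) ≠ 0 :=
      PadicInt.coe_ne_zero.mpr (hUnX k hk).ne_zero
    have hB3 : ((Pp p n (2*(n:ℤ_[p]) + 2*Y) k : ℤ_[p]):ℚ_[p]) ≠ 0 :=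
      PadicInt.coe_ne_zero.mpr (hUnY k hk).ne_zero
    have hB4 : ((Pp p n (2*(n:ℤ_[p]) + 2*((p:ℕ):ℤ_[p])) k : ℤ_[p]):ℚ_[p]) ≠ 0 :=
      PadicInt.coe_ne_zero.mpr (hUnp k hk).ne_zero
    have hKq : (k.factorial : ℚ_[p]) ≠ 0 := Nat.cast_ne_zero.mpr k.factorial_ne_zero
    have hck : (2*(n:ℚ_[p]))^k ≠ 0 := pow_ne_zero _ h2nQ
    rw [hNPdef, hDPdef]
    simp only [PadicInt.coe_mul, PadicInt.coe_pow, PadicInt.coe_natCast]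
    rw [c2]
    exact frac_assemble _ _ _ _ _ _ _ _ _ _ _ hB1 hB2 hB3 hB4 hKq hck
  set W : ℤ_[p] := ∑ k ∈ Finset.range (m+1), w k with hWdef
  have hφW : PadicInt.toZMod W = 0 := by
    rw [hWdef, map_sum]
    have e : ∀ k ∈ Finset.range (m+1), PadicInt.toZMod (w k)
        = (rfR α k)^4 * rfR β k * (rfR γ k * ((k.factorial:ℕ):ZMod p)^4)⁻¹ := by
      intro k hk
      rw [Finset.mem_range] at hk
      exact hwzmod k (by omega)
    rw [Finset.sum_congr rfl e]
    exact zmod_sum_zero p n m hp hn2 hneven hn4 hpm hmodd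
  have hdvd : (p:ℤ_[p]) ∣ W := by
    have hker : W ∈ RingHom.ker (PadicInt.toZMod : ℤ_[p] →+* ZMod p) :=
      RingHom.mem_ker.mpr hφW
    rwa [PadicInt.ker_toZMod, PadicInt.maximalIdeal_eq_span_p,
      Ideal.mem_span_singleton] at hker
  obtain ⟨c, hc⟩ := hdvd
  refine ⟨c, ?_⟩
  have hsumW : ((W : ℤ_[p]) : ℚ_[p]) = ∑ k ∈ Finset.range (m+1), ((w k : ℤ_[p]) : ℚ_[p]) := by
    rw [hWdef]
    exact map_sum (PadicInt.Coe.ringHom) _ _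
  have hsum : (∑ k ∈ Finset.range (m+1),
      rf (1 / (n : ℚ_[p])) k *
        rf ((2 * (n : ℚ_[p]) - 3) / (2 * (n : ℚ_[p]))) k *
        rf ((1 - x) / (n : ℚ_[p])) k *
        rf ((1 - y) / (n : ℚ_[p])) k *
        rf ((1 - (p : ℚ_[p])) / (n : ℚ_[p])) k /
      (rf (5 / (2 * (n : ℚ_[p]))) k *
        rf (1 + x / (n : ℚ_[p])) k *
        rf (1 + y / (n : ℚ_[p])) k *
        rf (1 + (p : ℚ_[p]) / (n : ℚ_[p])) k * (k.factorial : ℚ_[p])))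
      = ((W : ℤ_[p]) : ℚ_[p]) := by
    rw [hsumW]
    apply Finset.sum_congr rfl
    intro k hk
    rw [Finset.mem_range] at hk
    exact hwcoe k (by omega)
  rw [hsum, hc, PadicInt.coe_mul, PadicInt.coe_natCast]
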